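/- In the setting P = F h^{-1} F* with F holomorphic and h = F*F invertible, with curvature K_P = −∂̄(h^{-1}∂h) and connection form θ_P = h^{-1}∂h, one has (∂̄P)·(∂²P) = F·(−(∂K_P + [θ_P, K_P]))·h^{-1}·F* on Ω, where [a,b] = ab − ba. -/

import Mathlib

open Complex ContinuousLinearMap

set_option maxHeartbeats 4000000
set_option synthInstance.maxHeartbeats 1000000

/-- Wirtinger derivative ∂ = ∂/∂λ. -/
noncomputable def pd {E : Type*} [NormedAddCommGroup E] [NormedSpace ℂ E]
    (f : ℂ → E) : ℂ → E :=
  fun z => (2⁻¹ : ℂ) • (fderiv ℝ f z 1 - Complex.I • fderiv ℝ f z Complex.I)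

/-- Wirtinger derivative ∂̄ = ∂/∂λ̄. -/
noncomputable def pdbar {E : Type*} [NormedAddCommGroup E] [NormedSpace ℂ E]
    (f : ℂ → E) : ℂ → E :=
  fun z => (2⁻¹ : ℂ) • (fderiv ℝ f z 1 + Complex.I • fderiv ℝ f z Complex.I)

section basic
variable {E : Type*} [NormedAddCommGroup E] [NormedSpace ℂ E] {f g : ℂ → E} {z : ℂ}

theorem pd_congr (h : f =ᶠ[nhds z] g) : pd f z = pd g z := by
  simp only [pd, h.fderiv_eq]

theorem pdbar_congr (h : f =ᶠ[nhds z] g) : pdbar f z = pdbar g z := by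
  simp only [pdbar, h.fderiv_eq]

theorem fderivR_of_holo (hf : DifferentiableAt ℂ f z) :
    fderiv ℝ f z 1 = deriv f z ∧ fderiv ℝ f z Complex.I = Complex.I • deriv f z := by
  have h1 : fderiv ℝ f z = (fderiv ℂ f z).restrictScalars ℝ :=
    (hf.hasFDerivAt.restrictScalars ℝ).fderiv
  constructor
  · rw [h1]; rfl
  · rw [h1]
    show fderiv ℂ f z Complex.I = Complex.I • deriv f z
    rw [show (Complex.I : ℂ) = Complex.I • (1:ℂ) by simp, map_smul, smul_eq_mul, mul_one]
    rfl

theorem pd_of_holo (hf : DifferentiableAt ℂ f z) : pd f z = deriv f z := by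
  obtain ⟨h1, h2⟩ := fderivR_of_holo hf
  simp only [pd, h1, h2, smul_smul, Complex.I_mul_I]
  rw [neg_one_smul, sub_neg_eq_add, smul_add]
  rw [← add_smul]
  norm_num

theorem pdbar_of_holo (hf : DifferentiableAt ℂ f z) : pdbar f z = 0 := by
  obtain ⟨h1, h2⟩ := fderivR_of_holo hf
  simp only [pdbar, h1, h2, smul_smul, Complex.I_mul_I, neg_one_smul, add_neg_cancel, smul_zero]

theorem pd_neg : pd (fun w => -f w) z = -pd f z := by
  simp only [pd, fderiv_fun_neg, ContinuousLinearMap.neg_apply]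
  module

theorem pdbar_neg : pdbar (fun w => -f w) z = -pdbar f z := by
  simp only [pdbar, fderiv_fun_neg, ContinuousLinearMap.neg_apply]
  module

theorem pd_add (hf : DifferentiableAt ℝ f z) (hg : DifferentiableAt ℝ g z) :
    pd (fun w => f w + g w) z = pd f z + pd g z := by
  simp only [pd, fderiv_fun_add hf hg, ContinuousLinearMap.add_apply]
  module

theorem pdbar_add (hf : DifferentiableAt ℝ f z) (hg : DifferentiableAt ℝ g z) :
    pdbar (fun w => f w + g w) z = pdbar f z + pdbar g z := by
  simp only [pdbar, fderiv_fun_add hf hg, ContinuousLinearMap.add_apply]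
  module

end basic

section comp
set_option synthInstance.maxHeartbeats 1000000
variable {G₁ G₂ G₃ : Type*} [NormedAddCommGroup G₁] [NormedAddCommGroup G₂] [NormedAddCommGroup G₃]
    [NormedSpace ℂ G₁] [NormedSpace ℂ G₂] [NormedSpace ℂ G₃]

theorem isBBM_compR : IsBoundedBilinearMap ℝ
    (fun p : (G₂ →L[ℂ] G₃) × (G₁ →L[ℂ] G₂) => p.1.comp p.2) where
  add_left := fun A A' B => add_comp A A' B
  smul_left := fun r A B => smul_comp r A B
  add_right := fun A B B' => comp_add A B B'
  smul_right := fun r A B => comp_smul A r B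
  bound := ⟨1, one_pos, fun A B => by simpa using opNorm_comp_le A B⟩

variable {f : ℂ → G₂ →L[ℂ] G₃} {g : ℂ → G₁ →L[ℂ] G₂} {z : ℂ}

theorem DifferentiableAt.compR (hf : DifferentiableAt ℝ f z) (hg : DifferentiableAt ℝ g z) :
    DifferentiableAt ℝ (fun w => (f w).comp (g w)) z :=
  by have h := (isBBM_compR.differentiableAt (f z, g z)).comp z (hf.prodMk hg); exact h

theorem hasFDerivAt_compR {f' : ℂ →L[ℝ] G₂ →L[ℂ] G₃} {g' : ℂ →L[ℝ] G₁ →L[ℂ] G₂}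
    (hf : HasFDerivAt f f' z) (hg : HasFDerivAt g g' z) :
    HasFDerivAt (fun w => (f w).comp (g w))
      ((isBBM_compR.deriv (f z, g z)).comp (f'.prod g')) z :=
  by have h := (isBBM_compR.hasFDerivAt (f z, g z)).comp z (hf.prodMk hg); exact h

theorem fderiv_compR (hf : DifferentiableAt ℝ f z) (hg : DifferentiableAt ℝ g z) (v : ℂ) :
    fderiv ℝ (fun w => (f w).comp (g w)) z v =
      (fderiv ℝ f z v).comp (g z) + (f z).comp (fderiv ℝ g z v) := by
  rw [(hasFDerivAt_compR hf.hasFDerivAt hg.hasFDerivAt).fderiv]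
  simp [IsBoundedBilinearMap.deriv_apply, add_comm]

theorem pd_compR (hf : DifferentiableAt ℝ f z) (hg : DifferentiableAt ℝ g z) :
    pd (fun w => (f w).comp (g w)) z = (pd f z).comp (g z) + (f z).comp (pd g z) := by
  simp only [pd, fderiv_compR hf hg, smul_comp, comp_smul, sub_comp, comp_sub,
    smul_add, smul_sub]
  module

theorem pdbar_compR (hf : DifferentiableAt ℝ f z) (hg : DifferentiableAt ℝ g z) :
    pdbar (fun w => (f w).comp (g w)) z = (pdbar f z).comp (g z) + (f z).comp (pdbar g z) := by
  simp only [pdbar, fderiv_compR hf hg, smul_comp, comp_smul, add_comp, comp_add,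
    smul_add, smul_sub]
  module

end comp


section adj
variable {H K : Type*} [NormedAddCommGroup H] [InnerProductSpace ℂ H] [CompleteSpace H]
    [NormedAddCommGroup K] [InnerProductSpace ℂ K] [CompleteSpace K]

noncomputable def adjR : (K →L[ℂ] H) →L[ℝ] (H →L[ℂ] K) :=
  LinearMap.mkContinuous
    { toFun := fun A => ContinuousLinearMap.adjoint A
      map_add' := fun A B => by simp [map_add]
      map_smul' := fun r A => by
        simp only [RingHom.id_apply]
        rw [← Complex.coe_smul r A, ← Complex.coe_smul r (ContinuousLinearMap.adjoint A),
          LinearIsometryEquiv.map_smulₛₗ]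
        simp }
    1 (fun A => by simp)

variable {F : ℂ → K →L[ℂ] H} {z : ℂ}

theorem diff_adjR (hf : DifferentiableAt ℝ F z) :
    DifferentiableAt ℝ (fun w => ContinuousLinearMap.adjoint (F w)) z := by
  have h := ((adjR : (K →L[ℂ] H) →L[ℝ] (H →L[ℂ] K)).differentiableAt (x := F z)).comp z hf
  exact h

theorem fderiv_adjR (hf : DifferentiableAt ℝ F z) (v : ℂ) :
    fderiv ℝ (fun w => ContinuousLinearMap.adjoint (F w)) z v =
      ContinuousLinearMap.adjoint (fderiv ℝ F z v) := by
  have := (((adjR : (K →L[ℂ] H) →L[ℝ] (H →L[ℂ] K)).hasFDerivAt (x := F z)).comp z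
    hf.hasFDerivAt).fderiv
  rw [show (fun w => ContinuousLinearMap.adjoint (F w)) = adjR ∘ F from rfl, this]
  rfl

theorem pd_adj (hf : DifferentiableAt ℂ F z) :
    pd (fun w => ContinuousLinearMap.adjoint (F w)) z = 0 := by
  obtain ⟨h1, h2⟩ := fderivR_of_holo hf
  have hr := hf.restrictScalars ℝ
  simp only [pd, fderiv_adjR hr, h1, h2]
  rw [LinearIsometryEquiv.map_smulₛₗ, Complex.conj_I, smul_smul, mul_neg, Complex.I_mul_I,
    neg_neg, one_smul, sub_self, smul_zero]

theorem pdbar_adj (hf : DifferentiableAt ℂ F z) :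
    pdbar (fun w => ContinuousLinearMap.adjoint (F w)) z =
      ContinuousLinearMap.adjoint (deriv F z) := by
  obtain ⟨h1, h2⟩ := fderivR_of_holo hf
  have hr := hf.restrictScalars ℝ
  simp only [pdbar, fderiv_adjR hr, h1, h2]
  rw [LinearIsometryEquiv.map_smulₛₗ, Complex.conj_I, smul_smul, mul_neg, Complex.I_mul_I,
    neg_neg, one_smul]
  module

end adj

section inv
variable {K : Type*} [NormedAddCommGroup K] [InnerProductSpace ℂ K] [CompleteSpace K]
variable {f : ℂ → K →L[ℂ] K} {z : ℂ}

theorem diff_inverseR (hf : DifferentiableAt ℝ f z) (hu : IsUnit (f z)) :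
    DifferentiableAt ℝ (fun w => Ring.inverse (f w)) z :=
  ((differentiableAt_inverse hu).comp z hf : _)

theorem fderiv_inverseR (hf : DifferentiableAt ℝ f z) (hu : IsUnit (f z)) (v : ℂ) :
    fderiv ℝ (fun w => Ring.inverse (f w)) z v =
      -(Ring.inverse (f z) * fderiv ℝ f z v * Ring.inverse (f z)) := by
  have h1 : HasFDerivAt Ring.inverse
      (-mulLeftRight ℝ (K →L[ℂ] K) ↑hu.unit⁻¹ ↑hu.unit⁻¹) (f z) := by
    simpa only [hu.unit_spec] using hasFDerivAt_ringInverse (𝕜 := ℝ) hu.unit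
  have h2 := (h1.comp z hf.hasFDerivAt).fderiv
  rw [show (fun w => Ring.inverse (f w)) = Ring.inverse ∘ f from rfl, h2]
  have h3 : Ring.inverse (f z) = ↑hu.unit⁻¹ := by
    rw [← Ring.inverse_unit hu.unit, hu.unit_spec]
  simp [mulLeftRight_apply, h3]

theorem pd_inverseR (hf : DifferentiableAt ℝ f z) (hu : IsUnit (f z)) :
    pd (fun w => Ring.inverse (f w)) z =
      -(Ring.inverse (f z) * pd f z * Ring.inverse (f z)) := by
  simp only [pd, fderiv_inverseR hf hu, mul_sub, sub_mul, mul_smul_comm, smul_mul_assoc]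
  module

theorem pdbar_inverseR (hf : DifferentiableAt ℝ f z) (hu : IsUnit (f z)) :
    pdbar (fun w => Ring.inverse (f w)) z =
      -(Ring.inverse (f z) * pdbar f z * Ring.inverse (f z)) := by
  simp only [pdbar, fderiv_inverseR hf hu, mul_add, add_mul, mul_smul_comm, smul_mul_assoc]
  module

end inv

section aux
variable {H K : Type*} [NormedAddCommGroup H] [InnerProductSpace ℂ H] [CompleteSpace H]
    [NormedAddCommGroup K] [InnerProductSpace ℂ K] [CompleteSpace K]

noncomputable def wA (F : ℂ → K →L[ℂ] H) : ℂ → H →L[ℂ] K :=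
  fun w => ContinuousLinearMap.adjoint (F w)

noncomputable def wH (F : ℂ → K →L[ℂ] H) : ℂ → K →L[ℂ] K :=
  fun w => wA F w ∘L F w

noncomputable def wN (F : ℂ → K →L[ℂ] H) : ℂ → K →L[ℂ] K :=
  fun w => Ring.inverse (wH F w)

noncomputable def wNd (F : ℂ → K →L[ℂ] H) : ℂ → K →L[ℂ] K :=
  fun w => -((wN F w ∘L (wA F w ∘L deriv F w)) ∘L wN F w)

noncomputable def wNb (F : ℂ → K →L[ℂ] H) : ℂ → K →L[ℂ] K :=
  fun w => -((wN F w ∘L (wA (deriv F) w ∘L F w)) ∘L wN F w)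

noncomputable def wPhi (F : ℂ → K →L[ℂ] H) : ℂ → H →L[ℂ] H :=
  fun w => deriv F w ∘L (wN F w ∘L wA F w) + F w ∘L (wNd F w ∘L wA F w)

noncomputable def wK (F : ℂ → K →L[ℂ] H) : ℂ → K →L[ℂ] K :=
  fun w => -(wNb F w ∘L (wA F w ∘L deriv F w) + wN F w ∘L (wA (deriv F) w ∘L deriv F w))

end aux

theorem stmt8
    {H K : Type*} [NormedAddCommGroup H] [InnerProductSpace ℂ H] [CompleteSpace H]
    [NormedAddCommGroup K] [InnerProductSpace ℂ K] [CompleteSpace K]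
    (Ω : Set ℂ) (hΩ : IsOpen Ω)
    (F : ℂ → K →L[ℂ] H)
    (hF : DifferentiableOn ℂ F Ω)
    (h : ℂ → K →L[ℂ] K)
    (hdef : ∀ z ∈ Ω, h z = ContinuousLinearMap.adjoint (F z) ∘L F z)
    (hinv : ∀ z ∈ Ω, IsUnit (h z))
    (hi : ℂ → K →L[ℂ] K) (hhi : ∀ z ∈ Ω, hi z = Ring.inverse (h z))
    (P : ℂ → H →L[ℂ] H)
    (hP : ∀ z ∈ Ω, P z = F z ∘L hi z ∘L ContinuousLinearMap.adjoint (F z))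
    (KP : ℂ → K →L[ℂ] K)
    (hKP : ∀ z ∈ Ω, KP z = -(pdbar (fun w => hi w * pd h w) z))
    (θ : ℂ → K →L[ℂ] K) (hθ : ∀ z ∈ Ω, θ z = hi z * pd h z)
    : ∀ z ∈ Ω,
      pdbar P z * (pd^[2] P) z =
        F z ∘L ((-(pd KP z + (θ z * KP z - KP z * θ z))) * hi z) ∘L
          ContinuousLinearMap.adjoint (F z) := by
  have han : AnalyticOnNhd ℂ F Ω := hF.analyticOnNhd hΩ
  have dFc : ∀ w ∈ Ω, DifferentiableAt ℂ F w :=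
    fun w hw => hF.differentiableAt (hΩ.mem_nhds hw)
  have dF'c : ∀ w ∈ Ω, DifferentiableAt ℂ (deriv F) w :=
    fun w hw => (han.deriv w hw).differentiableAt
  have dF : ∀ w ∈ Ω, DifferentiableAt ℝ F w := fun w hw => (dFc w hw).restrictScalars ℝ
  have dF' : ∀ w ∈ Ω, DifferentiableAt ℝ (deriv F) w :=
    fun w hw => (dF'c w hw).restrictScalars ℝ
  have dA : ∀ w ∈ Ω, DifferentiableAt ℝ (wA F) w := fun w hw => diff_adjR (dF w hw)
  have dA' : ∀ w ∈ Ω, DifferentiableAt ℝ (wA (deriv F)) w := fun w hw => diff_adjR (dF' w hw)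
  have pF : ∀ w ∈ Ω, pd F w = deriv F w := fun w hw => pd_of_holo (dFc w hw)
  have bF : ∀ w ∈ Ω, pdbar F w = 0 := fun w hw => pdbar_of_holo (dFc w hw)
  have pF' : ∀ w ∈ Ω, pd (deriv F) w = deriv (deriv F) w :=
    fun w hw => pd_of_holo (dF'c w hw)
  have bF' : ∀ w ∈ Ω, pdbar (deriv F) w = 0 := fun w hw => pdbar_of_holo (dF'c w hw)
  have pA : ∀ w ∈ Ω, pd (wA F) w = 0 := fun w hw => pd_adj (dFc w hw)
  have bA : ∀ w ∈ Ω, pdbar (wA F) w = wA (deriv F) w := fun w hw => pdbar_adj (dFc w hw)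
  have pA' : ∀ w ∈ Ω, pd (wA (deriv F)) w = 0 := fun w hw => pd_adj (dF'c w hw)
  have dH : ∀ w ∈ Ω, DifferentiableAt ℝ (wH F) w :=
    fun w hw => (dA w hw).compR (dF w hw)
  have eH : ∀ w ∈ Ω, wH F w = h w := fun w hw => by rw [hdef w hw]; rfl
  have uH : ∀ w ∈ Ω, IsUnit (wH F w) := fun w hw => (eH w hw) ▸ hinv w hw
  have dN : ∀ w ∈ Ω, DifferentiableAt ℝ (wN F) w :=
    fun w hw => diff_inverseR (dH w hw) (uH w hw)
  have pH : ∀ w ∈ Ω, pd (wH F) w = wA F w ∘L deriv F w := by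
    intro w hw
    have h2 : pd (wH F) w = pd (wA F) w ∘L F w + wA F w ∘L pd F w :=
      pd_compR (dA w hw) (dF w hw)
    rw [h2, pA w hw, pF w hw, ContinuousLinearMap.zero_comp, zero_add]
  have bH : ∀ w ∈ Ω, pdbar (wH F) w = wA (deriv F) w ∘L F w := by
    intro w hw
    have h2 : pdbar (wH F) w = pdbar (wA F) w ∘L F w + wA F w ∘L pdbar F w :=
      pdbar_compR (dA w hw) (dF w hw)
    rw [h2, bA w hw, bF w hw, ContinuousLinearMap.comp_zero, add_zero]
  have pN : ∀ w ∈ Ω, pd (wN F) w = wNd F w := by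
    intro w hw
    have h2 : pd (wN F) w = -(wN F w * pd (wH F) w * wN F w) :=
      pd_inverseR (dH w hw) (uH w hw)
    rw [h2, pH w hw]; rfl
  have bN : ∀ w ∈ Ω, pdbar (wN F) w = wNb F w := by
    intro w hw
    have h2 : pdbar (wN F) w = -(wN F w * pdbar (wH F) w * wN F w) :=
      pdbar_inverseR (dH w hw) (uH w hw)
    rw [h2, bH w hw]; rfl
  have eqhi : ∀ w ∈ Ω, hi w = wN F w := fun w hw => by
    rw [hhi w hw, ← eH w hw]; rfl
  have pdh : ∀ w ∈ Ω, pd h w = wA F w ∘L deriv F w := by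
    intro w hw
    have e : h =ᶠ[nhds w] wH F :=
      Filter.eventuallyEq_of_mem (hΩ.mem_nhds hw) (fun v hv => ((eH v hv).symm : _))
    rw [pd_congr e, pH w hw]
  have pdP : ∀ w ∈ Ω, pd P w = wPhi F w := by
    intro w hw
    have e : P =ᶠ[nhds w] (fun v => F v ∘L (wN F v ∘L wA F v)) :=
      Filter.eventuallyEq_of_mem (hΩ.mem_nhds hw)
        (fun v hv => by rw [hP v hv, eqhi v hv]; rfl)
    have h1 : pd (fun v => F v ∘L (wN F v ∘L wA F v)) w =
        pd F w ∘L (wN F w ∘L wA F w) +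
          F w ∘L pd (fun v => wN F v ∘L wA F v) w :=
      pd_compR (dF w hw) ((dN w hw).compR (dA w hw))
    have h2 : pd (fun v => wN F v ∘L wA F v) w =
        pd (wN F) w ∘L wA F w + wN F w ∘L pd (wA F) w :=
      pd_compR (dN w hw) (dA w hw)
    rw [pd_congr e, h1, h2, pF w hw, pN w hw, pA w hw, ContinuousLinearMap.comp_zero,
      add_zero]
    rfl
  have bP : ∀ w ∈ Ω, pdbar P w =
      F w ∘L (wNb F w ∘L wA F w + wN F w ∘L wA (deriv F) w) := by
    intro w hw
    have e : P =ᶠ[nhds w] (fun v => F v ∘L (wN F v ∘L wA F v)) :=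
      Filter.eventuallyEq_of_mem (hΩ.mem_nhds hw)
        (fun v hv => by rw [hP v hv, eqhi v hv]; rfl)
    have h1 : pdbar (fun v => F v ∘L (wN F v ∘L wA F v)) w =
        pdbar F w ∘L (wN F w ∘L wA F w) +
          F w ∘L pdbar (fun v => wN F v ∘L wA F v) w :=
      pdbar_compR (dF w hw) ((dN w hw).compR (dA w hw))
    have h2 : pdbar (fun v => wN F v ∘L wA F v) w =
        pdbar (wN F) w ∘L wA F w + wN F w ∘L pdbar (wA F) w :=
      pdbar_compR (dN w hw) (dA w hw)
    rw [pdbar_congr e, h1, h2, bF w hw, bN w hw, bA w hw, ContinuousLinearMap.zero_comp,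
      zero_add]
  have hKPf : ∀ w ∈ Ω, KP w = wK F w := by
    intro w hw
    have e : (fun v => hi v * pd h v) =ᶠ[nhds w]
        (fun v => wN F v ∘L (wA F v ∘L deriv F v)) :=
      Filter.eventuallyEq_of_mem (hΩ.mem_nhds hw)
        (fun v hv => by rw [eqhi v hv, pdh v hv]; rfl)
    have h1 : pdbar (fun v => wN F v ∘L (wA F v ∘L deriv F v)) w =
        pdbar (wN F) w ∘L (wA F w ∘L deriv F w) +
          wN F w ∘L pdbar (fun v => wA F v ∘L deriv F v) w :=
      pdbar_compR (dN w hw) ((dA w hw).compR (dF' w hw))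
    have h2 : pdbar (fun v => wA F v ∘L deriv F v) w =
        pdbar (wA F) w ∘L deriv F w + wA F w ∘L pdbar (deriv F) w :=
      pdbar_compR (dA w hw) (dF' w hw)
    rw [hKP w hw, pdbar_congr e, h1, h2, bN w hw, bA w hw, bF' w hw,
      ContinuousLinearMap.comp_zero, add_zero]
    rfl
  intro z hz
  -- differentiability of the auxiliary derivative functions at z
  have dNd : DifferentiableAt ℝ (wNd F) z :=
    ((((dN z hz).compR ((dA z hz).compR (dF' z hz))).compR (dN z hz)).neg : _)
  have dNb : DifferentiableAt ℝ (wNb F) z :=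
    ((((dN z hz).compR ((dA' z hz).compR (dF z hz))).compR (dN z hz)).neg : _)
  -- value of pd (wNd F) at z
  have pdNd : pd (wNd F) z = -((wNd F z ∘L (wA F z ∘L deriv F z) + wN F z ∘L (wA F z ∘L deriv (deriv F) z)) ∘L wN F z + (wN F z ∘L (wA F z ∘L deriv F z)) ∘L wNd F z) := by
    have h0 : pd (wNd F) z =
        -pd (fun v => (wN F v ∘L (wA F v ∘L deriv F v)) ∘L wN F v) z := pd_neg
    have h1 : pd (fun v => (wN F v ∘L (wA F v ∘L deriv F v)) ∘L wN F v) z =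
        pd (fun v => wN F v ∘L (wA F v ∘L deriv F v)) z ∘L wN F z +
          (wN F z ∘L (wA F z ∘L deriv F z)) ∘L pd (wN F) z :=
      pd_compR ((dN z hz).compR ((dA z hz).compR (dF' z hz))) (dN z hz)
    have h2 : pd (fun v => wN F v ∘L (wA F v ∘L deriv F v)) z =
        pd (wN F) z ∘L (wA F z ∘L deriv F z) +
          wN F z ∘L pd (fun v => wA F v ∘L deriv F v) z :=
      pd_compR (dN z hz) ((dA z hz).compR (dF' z hz))
    have h3 : pd (fun v => wA F v ∘L deriv F v) z =
        pd (wA F) z ∘L deriv F z + wA F z ∘L pd (deriv F) z :=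
      pd_compR (dA z hz) (dF' z hz)
    rw [h0, h1, h2, h3, pN z hz, pA z hz, pF' z hz]
    simp only [ContinuousLinearMap.zero_comp, ContinuousLinearMap.comp_zero, zero_add,
      add_zero]
  -- value of pd (wNb F) at z
  have pdNb : pd (wNb F) z = -((wNd F z ∘L (wA (deriv F) z ∘L F z) + wN F z ∘L (wA (deriv F) z ∘L deriv F z)) ∘L wN F z + (wN F z ∘L (wA (deriv F) z ∘L F z)) ∘L wNd F z) := by
    have h0 : pd (wNb F) z =
        -pd (fun v => (wN F v ∘L (wA (deriv F) v ∘L F v)) ∘L wN F v) z := pd_neg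
    have h1 : pd (fun v => (wN F v ∘L (wA (deriv F) v ∘L F v)) ∘L wN F v) z =
        pd (fun v => wN F v ∘L (wA (deriv F) v ∘L F v)) z ∘L wN F z +
          (wN F z ∘L (wA (deriv F) z ∘L F z)) ∘L pd (wN F) z :=
      pd_compR ((dN z hz).compR ((dA' z hz).compR (dF z hz))) (dN z hz)
    have h2 : pd (fun v => wN F v ∘L (wA (deriv F) v ∘L F v)) z =
        pd (wN F) z ∘L (wA (deriv F) z ∘L F z) +
          wN F z ∘L pd (fun v => wA (deriv F) v ∘L F v) z :=
      pd_compR (dN z hz) ((dA' z hz).compR (dF z hz))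
    have h3 : pd (fun v => wA (deriv F) v ∘L F v) z =
        pd (wA (deriv F)) z ∘L F z + wA (deriv F) z ∘L pd F z :=
      pd_compR (dA' z hz) (dF z hz)
    rw [h0, h1, h2, h3, pN z hz, pA' z hz, pF z hz]
    simp only [ContinuousLinearMap.zero_comp, ContinuousLinearMap.comp_zero, zero_add,
      add_zero]
  -- value of the second derivative of P at z
  have p2v : pd^[2] P z = ((deriv (deriv F) z ∘L (wN F z ∘L wA F z) + deriv F z ∘L (wNd F z ∘L wA F z)) + (deriv F z ∘L (wNd F z ∘L wA F z) + F z ∘L ((-((wNd F z ∘L (wA F z ∘L deriv F z) + wN F z ∘L (wA F z ∘L deriv (deriv F) z)) ∘L wN F z + (wN F z ∘L (wA F z ∘L deriv F z)) ∘L wNd F z)) ∘L wA F z))) := by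
    have i2 : pd^[2] P z = pd (pd P) z := rfl
    have ePd : pd P =ᶠ[nhds z] wPhi F :=
      Filter.eventuallyEq_of_mem (hΩ.mem_nhds hz) (fun v hv => pdP v hv)
    have h0 : pd (wPhi F) z =
        pd (fun v => deriv F v ∘L (wN F v ∘L wA F v)) z +
          pd (fun v => F v ∘L (wNd F v ∘L wA F v)) z :=
      pd_add ((dF' z hz).compR ((dN z hz).compR (dA z hz)))
        ((dF z hz).compR (dNd.compR (dA z hz)))
    have hT1 : pd (fun v => deriv F v ∘L (wN F v ∘L wA F v)) z =
        pd (deriv F) z ∘L (wN F z ∘L wA F z) +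
          deriv F z ∘L pd (fun v => wN F v ∘L wA F v) z :=
      pd_compR (dF' z hz) ((dN z hz).compR (dA z hz))
    have hNA : pd (fun v => wN F v ∘L wA F v) z =
        pd (wN F) z ∘L wA F z + wN F z ∘L pd (wA F) z :=
      pd_compR (dN z hz) (dA z hz)
    have hT2 : pd (fun v => F v ∘L (wNd F v ∘L wA F v)) z =
        pd F z ∘L (wNd F z ∘L wA F z) +
          F z ∘L pd (fun v => wNd F v ∘L wA F v) z :=
      pd_compR (dF z hz) (dNd.compR (dA z hz))
    have hNdA : pd (fun v => wNd F v ∘L wA F v) z =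
        pd (wNd F) z ∘L wA F z + wNd F z ∘L pd (wA F) z :=
      pd_compR dNd (dA z hz)
    rw [i2, pd_congr ePd, h0, hT1, hNA, hT2, hNdA, pF' z hz, pF z hz, pN z hz, pA z hz,
      pdNd]
    simp only [ContinuousLinearMap.comp_zero, add_zero]
  -- value of pd KP at z
  have pdKv : pd KP z = -(((-((wNd F z ∘L (wA (deriv F) z ∘L F z) + wN F z ∘L (wA (deriv F) z ∘L deriv F z)) ∘L wN F z + (wN F z ∘L (wA (deriv F) z ∘L F z)) ∘L wNd F z)) ∘L (wA F z ∘L deriv F z) + wNb F z ∘L (wA F z ∘L deriv (deriv F) z)) + (wNd F z ∘L (wA (deriv F) z ∘L deriv F z) + wN F z ∘L (wA (deriv F) z ∘L deriv (deriv F) z))) := by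
    have eK : KP =ᶠ[nhds z] wK F :=
      Filter.eventuallyEq_of_mem (hΩ.mem_nhds hz) (fun v hv => hKPf v hv)
    have h0 : pd (wK F) z =
        -pd (fun v => wNb F v ∘L (wA F v ∘L deriv F v) +
          wN F v ∘L (wA (deriv F) v ∘L deriv F v)) z := pd_neg
    have h1 : pd (fun v => wNb F v ∘L (wA F v ∘L deriv F v) +
          wN F v ∘L (wA (deriv F) v ∘L deriv F v)) z =
        pd (fun v => wNb F v ∘L (wA F v ∘L deriv F v)) z +
          pd (fun v => wN F v ∘L (wA (deriv F) v ∘L deriv F v)) z :=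
      pd_add (dNb.compR ((dA z hz).compR (dF' z hz)))
        ((dN z hz).compR ((dA' z hz).compR (dF' z hz)))
    have hU1 : pd (fun v => wNb F v ∘L (wA F v ∘L deriv F v)) z =
        pd (wNb F) z ∘L (wA F z ∘L deriv F z) +
          wNb F z ∘L pd (fun v => wA F v ∘L deriv F v) z :=
      pd_compR dNb ((dA z hz).compR (dF' z hz))
    have hAF : pd (fun v => wA F v ∘L deriv F v) z =
        pd (wA F) z ∘L deriv F z + wA F z ∘L pd (deriv F) z :=
      pd_compR (dA z hz) (dF' z hz)
    have hU2 : pd (fun v => wN F v ∘L (wA (deriv F) v ∘L deriv F v)) z =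
        pd (wN F) z ∘L (wA (deriv F) z ∘L deriv F z) +
          wN F z ∘L pd (fun v => wA (deriv F) v ∘L deriv F v) z :=
      pd_compR (dN z hz) ((dA' z hz).compR (dF' z hz))
    have hAF2 : pd (fun v => wA (deriv F) v ∘L deriv F v) z =
        pd (wA (deriv F)) z ∘L deriv F z + wA (deriv F) z ∘L pd (deriv F) z :=
      pd_compR (dA' z hz) (dF' z hz)
    rw [pd_congr eK, h0, h1, hU1, hAF, hU2, hAF2, pN z hz, pA z hz, pA' z hz, pF' z hz,
      pdNb]
    simp only [ContinuousLinearMap.zero_comp, zero_add]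
  -- cancellation identities
  have hc1 : wN F z ∘L (ContinuousLinearMap.adjoint (F z) ∘L F z) = 1 := by
    have hh := Ring.inverse_mul_cancel (wH F z) (uH z hz)
    rw [ContinuousLinearMap.mul_def] at hh
    exact hh
  have hc2 : (ContinuousLinearMap.adjoint (F z) ∘L F z) ∘L wN F z = 1 := by
    have hh := Ring.mul_inverse_cancel (wH F z) (uH z hz)
    rw [ContinuousLinearMap.mul_def] at hh
    exact hh
  have hc1K : ∀ (X : K →L[ℂ] K),
      wN F z ∘L (ContinuousLinearMap.adjoint (F z) ∘L (F z ∘L X)) = X := by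
    intro X
    have e1 : (wN F z ∘L (ContinuousLinearMap.adjoint (F z) ∘L F z)) ∘L X = X := by
      rw [hc1, ContinuousLinearMap.one_def, ContinuousLinearMap.id_comp]
    rw [ContinuousLinearMap.comp_assoc, ContinuousLinearMap.comp_assoc] at e1
    exact e1
  have hc1H : ∀ (X : H →L[ℂ] K),
      wN F z ∘L (ContinuousLinearMap.adjoint (F z) ∘L (F z ∘L X)) = X := by
    intro X
    have e1 : (wN F z ∘L (ContinuousLinearMap.adjoint (F z) ∘L F z)) ∘L X = X := by
      rw [hc1, ContinuousLinearMap.one_def, ContinuousLinearMap.id_comp]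
    rw [ContinuousLinearMap.comp_assoc, ContinuousLinearMap.comp_assoc] at e1
    exact e1
  have hc2K : ∀ (X : K →L[ℂ] K),
      ContinuousLinearMap.adjoint (F z) ∘L (F z ∘L (wN F z ∘L X)) = X := by
    intro X
    have e1 : ((ContinuousLinearMap.adjoint (F z) ∘L F z) ∘L wN F z) ∘L X = X := by
      rw [hc2, ContinuousLinearMap.one_def, ContinuousLinearMap.id_comp]
    rw [ContinuousLinearMap.comp_assoc, ContinuousLinearMap.comp_assoc] at e1
    exact e1
  have hc2H : ∀ (X : H →L[ℂ] K),
      ContinuousLinearMap.adjoint (F z) ∘L (F z ∘L (wN F z ∘L X)) = X := by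
    intro X
    have e1 : ((ContinuousLinearMap.adjoint (F z) ∘L F z) ∘L wN F z) ∘L X = X := by
      rw [hc2, ContinuousLinearMap.one_def, ContinuousLinearMap.id_comp]
    rw [ContinuousLinearMap.comp_assoc, ContinuousLinearMap.comp_assoc] at e1
    exact e1
  -- substitute all computed values
  rw [bP z hz, p2v, pdKv, hKPf z hz, hθ z hz, eqhi z hz, pdh z hz]
  simp only [wK, wNd, wNb, wA, ContinuousLinearMap.mul_def]
  simp only [ContinuousLinearMap.comp_add, ContinuousLinearMap.add_comp,
    ContinuousLinearMap.comp_neg, ContinuousLinearMap.neg_comp,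
    ContinuousLinearMap.comp_sub, ContinuousLinearMap.sub_comp,
    ContinuousLinearMap.comp_assoc, neg_neg, neg_add, sub_eq_add_neg]
  simp only [hc1K, hc1H, hc2K, hc2H, hc1, hc2]
  abel
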